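/- Let α > 1. There exists a constant c̄₁ > 0 depending only on α such that for every finite nonempty set A ⊂ ℤ, the total interaction J(A, Aᶜ) = ∑_{x ∈ A} ∑_{y ∈ ℤ \ A} |x-y|^{-α} satisfies J(A, Aᶜ) ≥ c̄₁ · |A|^{2-α}. -/

import Mathlib

theorem stmt2 (α : ℝ) (hα : 1 < α) :
    ∃ c : ℝ, 0 < c ∧ ∀ A : Finset ℤ, A.Nonempty →
      c * (A.card : ℝ) ^ (2 - α) ≤
        ∑ x ∈ A, ∑' y : ℤ, if y ∈ A then 0 else |(x : ℝ) - (y : ℝ)| ^ (-α) := by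
  refine ⟨1, one_pos, fun A hA => ?_⟩
  set n := A.card with hn
  have hn0 : 0 < n := Finset.card_pos.mpr hA
  have hnR : (0:ℝ) < n := by exact_mod_cast hn0
  have hsum : ∀ x : ℤ, Summable (fun y : ℤ => |(x : ℝ) - (y : ℝ)| ^ (-α)) := by
    intro x
    have h1 : Summable fun z : ℤ => |(z : ℝ)| ^ (-α) := Real.summable_abs_int_rpow hα
    have hinj : Function.Injective (fun y : ℤ => x - y) := fun a b h => by
      simpa using h
    exact (h1.comp_injective hinj).congr (fun y => by
      simp only [Function.comp]; push_cast; ring_nf)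
  have hsum' : ∀ x : ℤ, Summable (fun y : ℤ => if y ∈ A then 0 else |(x : ℝ) - (y : ℝ)| ^ (-α)) := by
    intro x
    apply (hsum x).of_nonneg_of_le
    · intro y; split
      · exact le_rfl
      · positivity
    · intro y; split
      · positivity
      · exact le_rfl
  -- per-element lower bound
  have key : ∀ x ∈ A, (n : ℝ) ^ (1 - α) ≤
      ∑' y : ℤ, if y ∈ A then 0 else |(x : ℝ) - (y : ℝ)| ^ (-α) := by
    intro x hx
    set B : Finset ℤ := (Finset.Icc (x - n) (x + n)) \ A with hB
    have hcardI : (Finset.Icc (x - (n:ℤ)) (x + n)).card = 2 * n + 1 := by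
      rw [Int.card_Icc]; omega
    have hBcard : n + 1 ≤ B.card := by
      rw [hB]
      have := Finset.le_card_sdiff A (Finset.Icc (x - (n:ℤ)) (x + n))
      omega
    have step1 : ∑ y ∈ B, (if y ∈ A then (0:ℝ) else |(x : ℝ) - (y : ℝ)| ^ (-α)) ≤
        ∑' y : ℤ, if y ∈ A then 0 else |(x : ℝ) - (y : ℝ)| ^ (-α) := by
      apply Summable.sum_le_tsum B _ (hsum' x)
      intro y _; split
      · exact le_rfl
      · positivity
    refine le_trans ?_ step1
    have step2 : ∀ y ∈ B, (n : ℝ) ^ (-α) ≤ (if y ∈ A then (0:ℝ) else |(x : ℝ) - (y : ℝ)| ^ (-α)) := by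
      intro y hy
      simp only [hB, Finset.mem_sdiff, Finset.mem_Icc] at hy
      rw [if_neg hy.2]
      have hne : y ≠ x := fun h => hy.2 (h ▸ hx)
      have hcast : ((|x - y| : ℤ) : ℝ) = |(x:ℝ) - (y:ℝ)| := by push_cast; ring_nf
      have h1 : (1:ℝ) ≤ |(x : ℝ) - (y : ℝ)| := by
        rw [← hcast]
        exact_mod_cast Int.one_le_abs (by omega : x - y ≠ 0)
      have h2 : |(x : ℝ) - (y : ℝ)| ≤ (n : ℝ) := by
        rw [← hcast]
        have : |x - y| ≤ (n:ℤ) := abs_le.mpr ⟨by omega, by omega⟩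
        exact_mod_cast this
      exact Real.rpow_le_rpow_of_nonpos (by linarith) h2 (by linarith)
    calc (n : ℝ) ^ (1 - α) = (n : ℝ) * (n : ℝ) ^ (-α) := by
          rw [show (1 - α) = 1 + (-α) by ring, Real.rpow_add hnR, Real.rpow_one]
      _ ≤ (B.card : ℝ) * (n : ℝ) ^ (-α) := by
          apply mul_le_mul_of_nonneg_right _ (by positivity)
          exact_mod_cast le_trans (Nat.le_succ n) hBcard
      _ ≤ ∑ y ∈ B, (if y ∈ A then (0:ℝ) else |(x : ℝ) - (y : ℝ)| ^ (-α)) := by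
          have := Finset.card_nsmul_le_sum B _ _ step2
          simpa [nsmul_eq_mul] using this
  calc (1:ℝ) * (n : ℝ) ^ (2 - α) = (n : ℝ) * (n : ℝ) ^ (1 - α) := by
        rw [one_mul, show (2 - α) = 1 + (1 - α) by ring, Real.rpow_add hnR, Real.rpow_one]
    _ = ∑ _x ∈ A, (n : ℝ) ^ (1 - α) := by rw [Finset.sum_const, nsmul_eq_mul]
    _ ≤ _ := Finset.sum_le_sum key
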